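/- (Lenstra) Let b_1, …, b_n ∈ F_q[x]^n be a reduced basis of the lattice L, i.e., Σ_{i=1}^n |b_i| = deg(det B) where B is the matrix with rows b_1, …, b_n, ordered so that |b_1| ≤ |b_2| ≤ … ≤ |b_n|. Then for every 1 ≤ j ≤ n and every choice of j linearly independent vectors v_1, …, v_j ∈ L one has max{|v_1|, …, |v_j|} ≥ |b_j|. In particular |b_j| equals the j-th successive minimum of L. -/

import Mathlib

open Polynomial

/-- The degree-norm of a vector of polynomials: `|a| = max_i deg(a_i)`,
valued in `WithBot ℕ` (with `deg 0 = ⊥` playing the role of `-∞`). -/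
def degNorm {F : Type*} [Field F] {n : ℕ} (v : Fin n → Polynomial F) : WithBot ℕ :=
  Finset.univ.sup fun i => (v i).degree

private lemma coeff_prod_of_natDegree_le' {R : Type*} [CommSemiring R] {ι : Type*}
    (s : Finset ι) (p : ι → R[X]) (d : ι → ℕ) (h : ∀ i ∈ s, (p i).natDegree ≤ d i) :
    (∏ i ∈ s, p i).coeff (∑ i ∈ s, d i) = ∏ i ∈ s, (p i).coeff (d i) := by
  induction s using Finset.cons_induction with
  | empty => simp
  | cons a s ha ih =>
    rw [Finset.prod_cons, Finset.sum_cons,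
      coeff_mul_add_eq_of_natDegree_le (h a (Finset.mem_cons_self a s))
        ((natDegree_prod_le _ _).trans
          (Finset.sum_le_sum fun i hi => h i (Finset.mem_cons_of_mem hi))),
      ih fun i hi => h i (Finset.mem_cons_of_mem hi), Finset.prod_cons]

/-- **(Lenstra)** Let `b_1, …, b_n` be a reduced basis of the lattice `L ⊆ F_q[x]^n`,
i.e. `Σ_i |b_i| = deg(det B)`, ordered so that `|b_1| ≤ … ≤ |b_n|`.  Then for every
`j` (here `j : Fin n`, corresponding to the `(j+1)`-st vector in one-based counting)
and every choice of `j+1` linearly independent vectors `v_0, …, v_j ∈ L` one has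
`max_i |v_i| ≥ |b_j|`; in particular `|b_j|` is the `j`-th successive minimum of `L`. -/
theorem reduced_basis_attains_successive_minima {F : Type*} [Field F] [Fintype F] {n : ℕ}
    (b : Fin n → (Fin n → Polynomial F))
    (hb : LinearIndependent (Polynomial F) b)
    (hred : ∑ i, degNorm (b i) = (Matrix.of b).det.degree)
    (hsorted : Monotone fun i => degNorm (b i))
    (j : Fin n) (v : Fin (j.1 + 1) → (Fin n → Polynomial F))
    (hvL : ∀ i, v i ∈ Submodule.span (Polynomial F) (Set.range b))
    (hvind : LinearIndependent (Polynomial F) v) :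
    degNorm (b j) ≤ Finset.univ.sup fun i => degNorm (v i) := by
  classical
  -- basic facts about the basis vectors
  have hbne : ∀ i, b i ≠ 0 := fun i => hb.ne_zero i
  have hnebot : ∀ i, degNorm (b i) ≠ ⊥ := by
    intro i h
    apply hbne i
    funext s
    have := (Finset.sup_eq_bot_iff _ _).mp h s (Finset.mem_univ s)
    simpa [Polynomial.degree_eq_bot] using this
  set D : Fin n → ℕ := fun i => WithBot.unbotD 0 (degNorm (b i)) with hDdef
  have hD : ∀ i, degNorm (b i) = (D i : WithBot ℕ) := by
    intro i
    cases h : degNorm (b i) with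
    | bot => exact absurd h (hnebot i)
    | coe a =>
      simp only [hDdef, h, WithBot.unbotD_coe]
      rfl
  have hdegle : ∀ i s, ((b i) s).natDegree ≤ D i := by
    intro i s
    rw [Polynomial.natDegree_le_iff_degree_le, ← hD i]
    exact Finset.le_sup (f := fun t => ((b i) t).degree) (Finset.mem_univ s)
  -- the matrix of leading coefficients
  set Lmat : Matrix (Fin n) (Fin n) F := Matrix.of fun i k => ((b i) k).coeff (D i) with hLdef
  have hcoeffdet : ((Matrix.of b).det).coeff (∑ i, D i) = Lmat.det := by
    rw [Matrix.det_apply', Matrix.det_apply', Polynomial.finset_sum_coeff]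
    refine Finset.sum_congr rfl fun σ _ => ?_
    rw [← Polynomial.C_eq_intCast, Polynomial.coeff_C_mul]
    congr 1
    have h1 : (∑ i, D i) = ∑ i, D (σ i) := (Equiv.sum_comp σ D).symm
    simp only [Matrix.of_apply, hLdef]
    rw [h1, coeff_prod_of_natDegree_le' Finset.univ (fun i => b (σ i) i) (fun i => D (σ i))
      (fun i _ => hdegle (σ i) i)]
  have hdeg : ((Matrix.of b).det).degree = ((∑ i, D i : ℕ) : WithBot ℕ) := by
    rw [← hred]
    rw [Nat.cast_sum]
    exact Finset.sum_congr rfl fun i _ => hD i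
  have hdetne : Lmat.det ≠ 0 := by
    rw [← hcoeffdet]
    exact Polynomial.coeff_ne_zero_of_eq_degree hdeg
  have hL : LinearIndependent F fun i => Lmat i :=
    Matrix.linearIndependent_rows_iff_isUnit.mpr
      ((Matrix.isUnit_iff_isUnit_det _).mpr (isUnit_iff_ne_zero.mpr hdetne))
  -- key lemma: for a nonzero combination, the norm dominates each participating basis vector
  have key : ∀ (c : Fin n → Polynomial F) (k : Fin n), c k ≠ 0 →
      degNorm (b k) ≤ degNorm (∑ i, c i • b i) := by
    intro c k hck
    set T : Finset (Fin n) := Finset.univ.filter fun i => c i ≠ 0 with hTdef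
    have hkT : k ∈ T := by simp [hTdef, hck]
    have hTne : T.Nonempty := ⟨k, hkT⟩
    set m : ℕ := T.sup' hTne fun i => (c i).natDegree + D i with hm
    set S : Finset (Fin n) := T.filter fun i => (c i).natDegree + D i = m with hSdef
    have hSne : S.Nonempty := by
      obtain ⟨i, hi, hie⟩ := Finset.exists_mem_eq_sup' hTne fun i => (c i).natDegree + D i
      exact ⟨i, Finset.mem_filter.mpr ⟨hi, hie.symm⟩⟩
    set w : Fin n → F := ∑ i ∈ S, (c i).leadingCoeff • Lmat i with hwdef
    have hwne : w ≠ 0 := by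
      intro h0
      obtain ⟨i0, hi0⟩ := hSne
      have h1 := linearIndependent_iff'.mp hL S (fun i => (c i).leadingCoeff) h0 i0 hi0
      have hci0 : c i0 ≠ 0 := by
        have := (Finset.mem_filter.mp hi0).1
        simpa [hTdef] using this
      exact hci0 (Polynomial.leadingCoeff_eq_zero.mp h1)
    obtain ⟨s, hs⟩ := Function.ne_iff.mp hwne
    have hcoeffv : ((∑ i, c i • b i) s).coeff m = w s := by
      have happ : (∑ i, c i • b i) s = ∑ i, c i * (b i) s := by
        simp [Finset.sum_apply]
      rw [happ, Polynomial.finset_sum_coeff]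
      have hws : w s = ∑ i ∈ S, (c i).leadingCoeff * Lmat i s := by
        simp [hwdef, Finset.sum_apply]
      rw [hws]
      rw [← Finset.sum_subset (Finset.subset_univ S)]
      · refine Finset.sum_congr rfl fun i hi => ?_
        obtain ⟨hiT, him⟩ := Finset.mem_filter.mp hi
        rw [← him, coeff_mul_add_eq_of_natDegree_le le_rfl (hdegle i s)]
        rw [Polynomial.coeff_natDegree]
        rfl
      · intro i _ hiS
        by_cases hci : c i = 0
        · simp [hci]
        · have hiT : i ∈ T := by simp [hTdef, hci]
          have hle : (c i).natDegree + D i ≤ m := Finset.le_sup' (fun i => (c i).natDegree + D i) hiT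
          have hne2 : (c i).natDegree + D i ≠ m := fun h => hiS (Finset.mem_filter.mpr ⟨hiT, h⟩)
          refine Polynomial.coeff_eq_zero_of_natDegree_lt ?_
          calc (c i * (b i) s).natDegree ≤ (c i).natDegree + ((b i) s).natDegree :=
                Polynomial.natDegree_mul_le
            _ ≤ (c i).natDegree + D i := by
                exact add_le_add le_rfl (hdegle i s)
            _ < m := lt_of_le_of_ne hle hne2
    have h1 : (m : WithBot ℕ) ≤ degNorm (∑ i, c i • b i) := by
      refine le_trans (Polynomial.le_degree_of_ne_zero ?_)
        (Finset.le_sup (f := fun t => ((∑ i, c i • b i) t).degree) (Finset.mem_univ s))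
      rw [hcoeffv]; exact hs
    have h2 : degNorm (b k) ≤ (m : WithBot ℕ) := by
      rw [hD k]
      have : D k ≤ m := le_trans (Nat.le_add_left (D k) _) (Finset.le_sup' (fun i => (c i).natDegree + D i) hkT)
      exact_mod_cast this
    exact h2.trans h1
  -- main argument, by contradiction
  by_contra hcon
  rw [not_le] at hcon
  choose c hc using fun i => (Submodule.mem_span_range_iff_exists_fun _).mp (hvL i)
  have hc0 : ∀ i k, j ≤ k → c i k = 0 := by
    intro i k hjk
    by_contra hne
    have h1 := key (c i) k hne
    rw [hc i] at h1
    have h2 : degNorm (v i) ≤ Finset.univ.sup fun i => degNorm (v i) :=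
      Finset.le_sup (f := fun i => degNorm (v i)) (Finset.mem_univ i)
    have h3 : degNorm (b k) < degNorm (b j) := lt_of_le_of_lt (h1.trans h2) hcon
    exact absurd (hsorted hjk) (not_le.mpr h3)
  set g : Fin j.1 → (Fin n → Polynomial F) := fun t => b (Fin.castLE (le_of_lt j.isLt) t) with hg
  set N : Submodule (Polynomial F) (Fin n → Polynomial F) :=
    Submodule.span (Polynomial F) (Set.range g) with hN
  have hmem : ∀ i, v i ∈ N := by
    intro i
    rw [← hc i]
    apply Submodule.sum_mem
    intro k _
    by_cases hk : (k : ℕ) < j.1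
    · refine Submodule.smul_mem _ _ (Submodule.subset_span ⟨⟨k.1, hk⟩, ?_⟩)
      simp [hg]
    · rw [hc0 i k (by rwa [Fin.le_def, ← not_lt]), zero_smul]
      exact Submodule.zero_mem _
  have hrank : Module.rank (Polynomial F) N ≤ (j.1 : Cardinal) := by
    refine (rank_span_le _).trans ?_
    simpa using Cardinal.mk_range_le_lift (f := g)
  have hind' : LinearIndependent (Polynomial F) fun i => (⟨v i, hmem i⟩ : N) :=
    LinearIndependent.of_comp N.subtype hvind
  have hcard := hind'.cardinal_lift_le_rank
  simp only [Cardinal.mk_fin, Cardinal.lift_natCast] at hcard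
  have h6 := (Cardinal.lift_le.mpr hrank).trans_eq (Cardinal.lift_natCast _)
  have hfin : (j.1 + 1 : ℕ) ≤ (j.1 : ℕ) := by exact_mod_cast hcard.trans h6
  omega
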